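/- Let m ≥ 1 and δ ∈ {0,1}, and set n := 2m − δ. Then in P the intersection of the ideal J̄ n with the principal ideal ⟨w₁⟩ equals the ideal generated by f̄(2m+1) and w₂^(2−δ)·f̄(2m−1). (The identity J̄_{2m−δ} ∩ ⟨w₁⟩ = ⟨f̄_{2m+1}, w₂^{2−δ} f̄_{2m−1}⟩ established in the proof of Proposition 4.6(iv).) -/

import Mathlib

/- Context: `P = 𝔽₂[w₁,w₂]`, `f̄ 0 = 1`, `f̄ 1 = w₁`,
`f̄ (n+2) = w₁·f̄(n+1) + w₂·f̄ n`, and `J̄ n = ⟨f̄ (n+1), w₂·f̄ n⟩`. -/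

noncomputable section

open MvPolynomial

abbrev P2 : Type := MvPolynomial (Fin 2) (ZMod 2)

def w₁ : P2 := X 0
def w₂ : P2 := X 1

def fbar : ℕ → P2
  | 0 => 1
  | 1 => w₁
  | n + 2 => w₁ * fbar (n + 1) + w₂ * fbar n

def Jbar (n : ℕ) : Ideal P2 := Ideal.span {fbar (n + 1), w₂ * fbar n}

/- Statement 16: for `m ≥ 1`, `δ ∈ {0,1}`, `n = 2m - δ`:
`J̄ n ⊓ ⟨w₁⟩ = ⟨f̄ (2m+1), w₂^(2-δ)·f̄ (2m-1)⟩`. -/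
lemma fbar_add_two (n : ℕ) : fbar (n + 2) = w₁ * fbar (n + 1) + w₂ * fbar n := rfl

lemma w1_dvd_fbar_odd : ∀ k, w₁ ∣ fbar (2 * k + 1)
  | 0 => by simp [fbar]
  | k + 1 => by
    obtain ⟨c, hc⟩ := w1_dvd_fbar_odd k
    refine ⟨fbar (2 * k + 2) + w₂ * c, ?_⟩
    have h : 2 * (k + 1) + 1 = (2 * k + 1) + 2 := by ring
    rw [h, fbar_add_two, hc]; ring

lemma fbar_even_mod : ∀ k, ∃ g, fbar (2 * k) = w₁ * g + w₂ ^ k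
  | 0 => ⟨0, by simp [fbar]⟩
  | k + 1 => by
    obtain ⟨g, hg⟩ := fbar_even_mod k
    refine ⟨fbar (2 * k + 1) + w₂ * g, ?_⟩
    have h : 2 * (k + 1) = 2 * k + 2 := by ring
    rw [h, fbar_add_two, hg]; ring

lemma prime_w1 : Prime w₁ := by
  rw [w₁, ← MulEquiv.prime_iff (MvPolynomial.finSuccEquiv (ZMod 2) 1).toMulEquiv]
  simpa [finSuccEquiv_X_zero] using Polynomial.prime_X

lemma not_w1_dvd_w2_pow (k : ℕ) : ¬ w₁ ∣ w₂ ^ k := by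
  rintro ⟨c, hc⟩
  have := congrArg (MvPolynomial.eval fun i : Fin 2 => if i = 0 then 0 else 1) hc
  simp [w₁, w₂] at this

theorem Jbar_inter_w1 (m δ : ℕ) (hm : 1 ≤ m) (hδ : δ = 0 ∨ δ = 1) :
    Jbar (2 * m - δ) ⊓ Ideal.span {w₁} =
      Ideal.span {fbar (2 * m + 1), w₂ ^ (2 - δ) * fbar (2 * m - 1)} := by
  obtain ⟨k, rfl⟩ : ∃ k, m = k + 1 := ⟨m - 1, by omega⟩
  have hrec : fbar (2 * k + 3) = w₁ * fbar (2 * k + 2) + w₂ * fbar (2 * k + 1) := by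
    rw [show 2 * k + 3 = 2 * k + 1 + 2 from by omega]; exact fbar_add_two _
  obtain ⟨c, hc⟩ := w1_dvd_fbar_odd k
  have hAdvd : w₁ ∣ fbar (2 * k + 3) := by
    have := w1_dvd_fbar_odd (k + 1)
    rwa [show 2 * (k + 1) + 1 = 2 * k + 3 from by omega] at this
  obtain ⟨g, hg⟩ := fbar_even_mod (k + 1)
  rw [show 2 * (k + 1) = 2 * k + 2 from by omega] at hg
  rcases hδ with rfl | rfl
  · rw [show 2 * (k + 1) - 0 = 2 * k + 2 from by omega,
        show 2 * (k + 1) + 1 = 2 * k + 3 from by omega,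
        show 2 * (k + 1) - 1 = 2 * k + 1 from by omega, Jbar,
        show 2 * k + 2 + 1 = 2 * k + 3 from by omega]
    apply le_antisymm
    · rintro x hx
      obtain ⟨hx1, hx2⟩ := Ideal.mem_inf.mp hx
      rw [Ideal.mem_span_pair] at hx1
      obtain ⟨a, b, hab⟩ := hx1
      obtain ⟨d, hd⟩ := Ideal.mem_span_singleton.mp hx2
      have hbd : w₁ ∣ b * w₂ ^ (k + 2) := by
        obtain ⟨e, he⟩ := hAdvd
        refine ⟨d - a * e - b * w₂ * g, ?_⟩
        linear_combination hab + hd - a * he - b * w₂ * hg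
      have hb : w₁ ∣ b :=
        (prime_w1.dvd_or_dvd hbd).resolve_right (not_w1_dvd_w2_pow _)
      obtain ⟨b', hb'⟩ := hb
      rw [Ideal.mem_span_pair]
      refine ⟨a + b' * w₂, -b', ?_⟩
      rw [← hab, hb', hrec]; ring
    · rw [Ideal.span_le]
      rintro x hx
      simp only [Set.mem_insert_iff, Set.mem_singleton_iff] at hx
      rcases hx with rfl | rfl
      · refine Ideal.mem_inf.mpr ⟨?_, Ideal.mem_span_singleton.mpr hAdvd⟩
        exact Ideal.mem_span_pair.mpr ⟨1, 0, by ring⟩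
      · refine Ideal.mem_inf.mpr ⟨?_, Ideal.mem_span_singleton.mpr ⟨w₂ ^ 2 * c, by rw [hc]; ring⟩⟩
        exact Ideal.mem_span_pair.mpr ⟨w₂, -w₁, by rw [hrec]; ring⟩
  · rw [show 2 * (k + 1) - 1 = 2 * k + 1 from by omega,
        show 2 * (k + 1) + 1 = 2 * k + 3 from by omega, Jbar,
        show 2 * k + 1 + 1 = 2 * k + 2 from by omega, pow_one]
    apply le_antisymm
    · rintro x hx
      obtain ⟨hx1, hx2⟩ := Ideal.mem_inf.mp hx
      rw [Ideal.mem_span_pair] at hx1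
      obtain ⟨a, b, hab⟩ := hx1
      obtain ⟨d, hd⟩ := Ideal.mem_span_singleton.mp hx2
      have had : w₁ ∣ a * w₂ ^ (k + 1) := by
        refine ⟨d - a * g - b * w₂ * c, ?_⟩
        linear_combination hab + hd - a * hg - b * w₂ * hc
      have ha : w₁ ∣ a :=
        (prime_w1.dvd_or_dvd had).resolve_right (not_w1_dvd_w2_pow _)
      obtain ⟨a', ha'⟩ := ha
      rw [Ideal.mem_span_pair]
      refine ⟨a', b - a', ?_⟩
      rw [← hab, ha', hrec]; ring
    · rw [Ideal.span_le]
      rintro x hx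
      simp only [Set.mem_insert_iff, Set.mem_singleton_iff] at hx
      rcases hx with rfl | rfl
      · refine Ideal.mem_inf.mpr ⟨?_, Ideal.mem_span_singleton.mpr hAdvd⟩
        exact Ideal.mem_span_pair.mpr ⟨w₁, 1, by rw [hrec]; ring⟩
      · refine Ideal.mem_inf.mpr ⟨?_, Ideal.mem_span_singleton.mpr ⟨w₂ * c, by rw [hc]; ring⟩⟩
        exact Ideal.mem_span_pair.mpr ⟨0, 1, by ring⟩

end
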